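/- Let Λ be a finitely aligned P-graph, μ ∈ Λ, and E a finite exhaustive subset of s(μ)Λ. If U is an ultrafilter of Λ containing μ, then there exists α ∈ E such that μα ∈ U. -/

import Mathlib

universe u

/-- A quasi-lattice ordered group in the sense of Nica: a (discrete) group `G` together
with a subsemigroup `P` containing the identity with `P ∩ P⁻¹ = {1}`, such that under the
partial order `p ≤ q ↔ p⁻¹ * q ∈ P`, any pair of elements of `G` with a common upper bound
in `P` has a least common upper bound in `P`. -/
structure QLOGroup (G : Type u) [Group G] where
  P : Set G
  one_mem : (1 : G) ∈ P
  mul_mem : ∀ {p q : G}, p ∈ P → q ∈ P → p * q ∈ P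
  eq_one_of_mem_inv_mem : ∀ p : G, p ∈ P → p⁻¹ ∈ P → p = 1
  lub_exists : ∀ p q : G, (∃ r ∈ P, p⁻¹ * r ∈ P ∧ q⁻¹ * r ∈ P) →
    ∃ r ∈ P, p⁻¹ * r ∈ P ∧ q⁻¹ * r ∈ P ∧
      ∀ s ∈ P, p⁻¹ * s ∈ P → q⁻¹ * s ∈ P → r⁻¹ * s ∈ P

namespace QLOGroup

variable {G : Type u} [Group G]

/-- The left-invariant partial order on `G` induced by `P`. -/
def le (Q : QLOGroup G) (p q : G) : Prop := p⁻¹ * q ∈ Q.P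

/-- `s` is the least common upper bound in `P` of `p` and `q` (i.e. `s = p ∨ q < ∞`). -/
def IsLub (Q : QLOGroup G) (p q s : G) : Prop :=
  s ∈ Q.P ∧ Q.le p s ∧ Q.le q s ∧ ∀ t ∈ Q.P, Q.le p t → Q.le q t → Q.le s t

/-- `s` is the least upper bound in `P` of the set `A` (i.e. `s = ∨A < ∞`). -/
def IsLubSet (Q : QLOGroup G) (A : Set G) (s : G) : Prop :=
  s ∈ Q.P ∧ (∀ a ∈ A, Q.le a s) ∧ ∀ t ∈ Q.P, (∀ a ∈ A, Q.le a t) → Q.le s t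

/-- `p` and `q` have a common upper bound in `P` (i.e. `p ∨ q < ∞`). -/
def HasLub (Q : QLOGroup G) (p q : G) : Prop := ∃ s, Q.IsLub p q s

/-- A subset `F` is `∨`-closed if whenever `p, q ∈ F` have `p ∨ q < ∞`, then `p ∨ q ∈ F`. -/
def VeeClosed (Q : QLOGroup G) (F : Set G) : Prop :=
  ∀ p ∈ F, ∀ q ∈ F, ∀ s, Q.IsLub p q s → s ∈ F

/-- `F̄ = {∨A : A ⊆ F, A ≠ ∅, ∨A ≠ ∞}`. -/
def veeClosure (Q : QLOGroup G) (F : Set G) : Set G :=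
  {s | ∃ A ⊆ F, A.Nonempty ∧ Q.IsLubSet A s}

end QLOGroup

/-- A `P`-graph for a quasi-lattice ordered group `(G,P)`: a countable category with a
degree functor `d` into `P` satisfying the unique factorisation property.  Composition is
written in the path order of Raeburn-Sims: `comp μ ν` is defined when `s(μ) = r(ν)` (with
`src = s = dom` and `tgt = r = cod`), and `comp` is a total function whose axioms are only
imposed on composable pairs. -/
structure PGraph {G : Type u} [Group G] (Q : QLOGroup G) where
  Obj : Type
  Mor : Type
  countable_mor : Countable Mor
  src : Mor → Obj
  tgt : Mor → Obj
  ident : Obj → Mor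
  comp : Mor → Mor → Mor
  src_ident : ∀ v, src (ident v) = v
  tgt_ident : ∀ v, tgt (ident v) = v
  src_comp : ∀ μ ν, src μ = tgt ν → src (comp μ ν) = src ν
  tgt_comp : ∀ μ ν, src μ = tgt ν → tgt (comp μ ν) = tgt μ
  id_comp : ∀ μ, comp (ident (tgt μ)) μ = μ
  comp_id : ∀ μ, comp μ (ident (src μ)) = μ
  comp_assoc : ∀ μ ν ρ, src μ = tgt ν → src ν = tgt ρ →
    comp (comp μ ν) ρ = comp μ (comp ν ρ)
  d : Mor → G
  d_mem : ∀ μ, d μ ∈ Q.P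
  d_ident : ∀ v, d (ident v) = 1
  d_comp : ∀ μ ν, src μ = tgt ν → d (comp μ ν) = d μ * d ν
  factorisation : ∀ (lam : Mor) (p q : G), p ∈ Q.P → q ∈ Q.P → d lam = p * q →
    ∃! mn : Mor × Mor, src mn.1 = tgt mn.2 ∧ lam = comp mn.1 mn.2 ∧ d mn.1 = p ∧ d mn.2 = q

namespace PGraph

variable {G : Type u} [Group G] {Q : QLOGroup G} (Λ : PGraph Q)

/-- The prefix order: `λ ⪯ μ` iff `μ = λμ'` for some `μ'`. -/
def PrefixLe (lam mu : Λ.Mor) : Prop :=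
  ∃ tail, Λ.src lam = Λ.tgt tail ∧ mu = Λ.comp lam tail

/-- The set of minimal common extensions of `μ` and `ν`. -/
def MCE (mu nu : Λ.Mor) : Set Λ.Mor :=
  {lam | Λ.PrefixLe mu lam ∧ Λ.PrefixLe nu lam ∧ Q.IsLub (Λ.d mu) (Λ.d nu) (Λ.d lam)}

/-- `Λ` is finitely aligned if all the sets `MCE(μ,ν)` are finite. -/
def FinitelyAligned : Prop := ∀ mu nu : Λ.Mor, (Λ.MCE mu nu).Finite

/-- A filter of `Λ`: a nonempty subset that is downward closed (F1) and upward
directed (F2) for the prefix order. -/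
def IsGraphFilter (U : Set Λ.Mor) : Prop :=
  U.Nonempty ∧ (∀ mu ∈ U, ∀ lam, Λ.PrefixLe lam mu → lam ∈ U) ∧
    (∀ mu ∈ U, ∀ nu ∈ U, ∃ lam ∈ U, Λ.PrefixLe mu lam ∧ Λ.PrefixLe nu lam)

/-- An ultrafilter of `Λ`: a filter maximal under inclusion. -/
def IsGraphUltrafilter (U : Set Λ.Mor) : Prop :=
  Λ.IsGraphFilter U ∧ ∀ V, Λ.IsGraphFilter V → U ⊆ V → U = V

/-- `λ·U = ⋃_{μ ∈ U} {α : α ⪯ λμ}`. -/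
def actFwd (lam : Λ.Mor) (U : Set Λ.Mor) : Set Λ.Mor :=
  {a | ∃ mu ∈ U, Λ.PrefixLe a (Λ.comp lam mu)}

/-- `λ*·V = {μ : λμ ∈ V}`. -/
def actBwd (lam : Λ.Mor) (V : Set Λ.Mor) : Set Λ.Mor :=
  {mu | Λ.src lam = Λ.tgt mu ∧ Λ.comp lam mu ∈ V}

/-- `(μ,ν)` is a balanced pair: `s(μ) = s(ν)` and `d(μ) = d(ν)`. -/
def Balanced (mu nu : Λ.Mor) : Prop := Λ.src mu = Λ.src nu ∧ Λ.d mu = Λ.d nu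

/-- The pairs `(α,β)` with `να = ξβ ∈ MCE(ν,ξ)`. -/
def MCEpairs (nu xi : Λ.Mor) : Set (Λ.Mor × Λ.Mor) :=
  {p | Λ.src nu = Λ.tgt p.1 ∧ Λ.src xi = Λ.tgt p.2 ∧
    Λ.comp nu p.1 = Λ.comp xi p.2 ∧ Λ.comp nu p.1 ∈ Λ.MCE nu xi}

end PGraph

section Aux

namespace PGraph

variable {G : Type u} [Group G] {Q : QLOGroup G} {Λ : PGraph Q}

theorem qle_refl (p : G) : Q.le p p := by
  simpa [QLOGroup.le] using Q.one_mem

theorem qle_trans {p q r : G} (h1 : Q.le p q) (h2 : Q.le q r) : Q.le p r := by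
  have h := Q.mul_mem h1 h2
  rwa [show p⁻¹ * q * (q⁻¹ * r) = p⁻¹ * r by group] at h

theorem prefix_refl (mu : Λ.Mor) : Λ.PrefixLe mu mu :=
  ⟨Λ.ident (Λ.src mu), (Λ.tgt_ident _).symm, (Λ.comp_id mu).symm⟩

theorem prefix_trans {a b c : Λ.Mor} (h1 : Λ.PrefixLe a b) (h2 : Λ.PrefixLe b c) :
    Λ.PrefixLe a c := by
  obtain ⟨t, ht, rfl⟩ := h1
  obtain ⟨s, hs, rfl⟩ := h2
  have hts : Λ.src t = Λ.tgt s := by rwa [Λ.src_comp a t ht] at hs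
  exact ⟨Λ.comp t s, by rw [Λ.tgt_comp t s hts]; exact ht,
    (Λ.comp_assoc a t s ht hts)⟩

theorem prefix_d {a b : Λ.Mor} (h : Λ.PrefixLe a b) : Q.le (Λ.d a) (Λ.d b) := by
  obtain ⟨t, ht, rfl⟩ := h
  rw [QLOGroup.le, Λ.d_comp a t ht, inv_mul_cancel_left]
  exact Λ.d_mem t

theorem comp_mono (mu : Λ.Mor) {x y : Λ.Mor} (hc : Λ.src mu = Λ.tgt x)
    (h : Λ.PrefixLe x y) : Λ.PrefixLe (Λ.comp mu x) (Λ.comp mu y) := by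
  obtain ⟨t, ht, rfl⟩ := h
  exact ⟨t, by rw [Λ.src_comp mu x hc]; exact ht, (Λ.comp_assoc mu x t hc ht).symm⟩

/-- If `a ⪯ σ`, `τ ⪯ σ` and `d a ≤ d τ`, then `a ⪯ τ`. -/
theorem prefix_of_le_deg {a tau sigma : Λ.Mor} (ha : Λ.PrefixLe a sigma)
    (htau : Λ.PrefixLe tau sigma) (hd : Q.le (Λ.d a) (Λ.d tau)) : Λ.PrefixLe a tau := by
  obtain ⟨t, ht, hst⟩ := ha
  obtain ⟨s, hs, hss⟩ := htau
  obtain ⟨mn, ⟨hmnc, hmne, hd1, hd2⟩, _⟩ :=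
    Λ.factorisation tau (Λ.d a) ((Λ.d a)⁻¹ * Λ.d tau) (Λ.d_mem a) hd (by group)
  have hs2 : Λ.src mn.2 = Λ.tgt s := by
    rwa [hmne, Λ.src_comp mn.1 mn.2 hmnc] at hs
  have hqmem : (Λ.d a)⁻¹ * Λ.d sigma ∈ Q.P := by
    rw [hst, Λ.d_comp a t ht, inv_mul_cancel_left]; exact Λ.d_mem t
  obtain ⟨pq, hpq, huniq⟩ :=
    Λ.factorisation sigma (Λ.d a) ((Λ.d a)⁻¹ * Λ.d sigma) (Λ.d_mem a) hqmem (by group)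
  have h1 : ((a, t) : Λ.Mor × Λ.Mor) = pq := by
    refine huniq _ ⟨ht, hst, rfl, ?_⟩
    rw [hst, Λ.d_comp a t ht, inv_mul_cancel_left]
  have h2 : ((mn.1, Λ.comp mn.2 s) : Λ.Mor × Λ.Mor) = pq := by
    refine huniq _ ⟨by rw [Λ.tgt_comp mn.2 s hs2]; exact hmnc, ?_, hd1, ?_⟩
    · rw [hss, hmne, Λ.comp_assoc mn.1 mn.2 s hmnc hs2]
    · rw [Λ.d_comp mn.2 s hs2, hd2, hss, Λ.d_comp tau s hs]
      group
  have hae : a = mn.1 := congrArg Prod.fst (h1.trans h2.symm)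
  exact ⟨mn.2, by rw [hae]; exact hmnc, by rw [hae]; exact hmne⟩

/-- A common extension of `a` and `b` dominates a minimal common extension. -/
theorem mce_of_common_ext {a b sigma : Λ.Mor} (ha : Λ.PrefixLe a sigma)
    (hb : Λ.PrefixLe b sigma) : ∃ τ ∈ Λ.MCE a b, Λ.PrefixLe τ sigma := by
  obtain ⟨r, hrP, hr1, hr2, hrmin⟩ :=
    Q.lub_exists (Λ.d a) (Λ.d b) ⟨Λ.d sigma, Λ.d_mem _, prefix_d ha, prefix_d hb⟩
  have hrle : Q.le r (Λ.d sigma) := hrmin _ (Λ.d_mem _) (prefix_d ha) (prefix_d hb)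
  obtain ⟨mn, ⟨hmnc, hmne, hd1, hd2⟩, _⟩ :=
    Λ.factorisation sigma r (r⁻¹ * Λ.d sigma) hrP hrle (by group)
  have hτσ : Λ.PrefixLe mn.1 sigma := ⟨mn.2, hmnc, hmne⟩
  have hda : Q.le (Λ.d a) (Λ.d mn.1) := by rw [QLOGroup.le, hd1]; exact hr1
  have hdb : Q.le (Λ.d b) (Λ.d mn.1) := by rw [QLOGroup.le, hd1]; exact hr2
  refine ⟨mn.1, ⟨prefix_of_le_deg ha hτσ hda, prefix_of_le_deg hb hτσ hdb,
    ?_, hda, hdb, ?_⟩, hτσ⟩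
  · rw [hd1]; exact hrP
  · intro u hu h1 h2
    rw [QLOGroup.le, hd1]; exact hrmin u hu h1 h2

theorem mce_restrict {lam ν ν' z : Λ.Mor} (hνν' : Λ.PrefixLe ν ν')
    (hz : z ∈ Λ.MCE lam ν') : ∃ y ∈ Λ.MCE lam ν, Λ.PrefixLe y z :=
  mce_of_common_ext hz.1 (prefix_trans hνν' hz.2.1)

theorem mce_prefix_mce {lam ν ν' x y w : Λ.Mor} (hνν' : Λ.PrefixLe ν ν')
    (hx : x ∈ Λ.MCE lam ν) (hy : y ∈ Λ.MCE lam ν')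
    (hxw : Λ.PrefixLe x w) (hyw : Λ.PrefixLe y w) : Λ.PrefixLe x y :=
  prefix_of_le_deg hxw hyw
    (hx.2.2.2.2.2 _ (Λ.d_mem y) (prefix_d hy.1) (prefix_d (prefix_trans hνν' hy.2.1)))

/-- A filter contains an upper bound for each of its finite subsets. -/
theorem filter_bound {U : Set Λ.Mor} (hU : Λ.IsGraphFilter U) {S : Set Λ.Mor}
    (hS : S.Finite) : S ⊆ U → ∃ ν ∈ U, ∀ b ∈ S, Λ.PrefixLe b ν := by
  refine Set.Finite.induction_on
    (motive := fun S _ => S ⊆ U → ∃ ν ∈ U, ∀ b ∈ S, Λ.PrefixLe b ν) S hS ?_ ?_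
  case _ =>
    intro _
    obtain ⟨ν, hν⟩ := hU.1
    exact ⟨ν, hν, fun b hb => absurd hb (Set.notMem_empty b)⟩
  case _ =>
    intro a s ha hs ih hsub
    obtain ⟨ν, hν, hbound⟩ := ih (fun b hb => hsub (Set.mem_insert_of_mem _ hb))
    obtain ⟨ρ, hρ, hle1, hle2⟩ := hU.2.2 a (hsub (Set.mem_insert _ _)) ν hν
    refine ⟨ρ, hρ, fun b hb => ?_⟩
    rcases hb with rfl | hb
    · exact hle1
    · exact prefix_trans (hbound b hb) hle2

theorem pigeon {α : Type*} {S : Set α} (hS : S.Finite) (Φ : ℕ → α → Prop)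
    (h : ∀ m, ∃ m', m ≤ m' ∧ ∃ y ∈ S, Φ m' y) :
    ∃ y ∈ S, ∀ m, ∃ m', m ≤ m' ∧ Φ m' y := by
  classical
  by_contra hc
  push_neg at hc
  choose b hb using hc
  set M : ℕ := hS.toFinset.sup (fun y => if hy : y ∈ S then b y hy else 0) with hM
  obtain ⟨m', hm', y, hyS, hΦ⟩ := h (M + 1)
  have hle : b y hyS ≤ M := by
    have := Finset.le_sup (f := fun y => if hy : y ∈ S then b y hy else 0)
      (hS.mem_toFinset.2 hyS)
    rw [hM]
    simp only [dif_pos hyS] at this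
    exact this
  exact hb y hyS m' (by omega) hΦ

/-- Key maximality lemma: if `lam` has a common extension with every element of an
ultrafilter `U`, then `lam ∈ U`. -/
theorem mem_of_compat {U : Set Λ.Mor} (hFA : Λ.FinitelyAligned)
    (hU : Λ.IsGraphUltrafilter U) {lam : Λ.Mor}
    (hcompat : ∀ ν ∈ U, (Λ.MCE lam ν).Nonempty) : lam ∈ U := by
  classical
  haveI : Countable Λ.Mor := Λ.countable_mor
  obtain ⟨f, hf⟩ := Set.Countable.exists_eq_range (U.to_countable) hU.1.1
  have hfU : ∀ n, f n ∈ U := fun n => hf ▸ Set.mem_range_self n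
  -- build a cofinal chain σ in U
  have key : ∀ a b : Λ.Mor, ∃ c, a ∈ U → b ∈ U →
      c ∈ U ∧ Λ.PrefixLe a c ∧ Λ.PrefixLe b c := by
    intro a b
    by_cases ha : a ∈ U
    · by_cases hb : b ∈ U
      · obtain ⟨c, hc, h1, h2⟩ := hU.1.2.2 a ha b hb
        exact ⟨c, fun _ _ => ⟨hc, h1, h2⟩⟩
      · exact ⟨a, fun _ hb' => absurd hb' hb⟩
    · exact ⟨a, fun ha' => absurd ha' ha⟩
  choose g hg using key
  set σ : ℕ → Λ.Mor := fun n => Nat.rec (f 0) (fun n s => g s (f (n + 1))) n with hσ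
  have hσU : ∀ n, σ n ∈ U := by
    intro n; induction n with
    | zero => exact hfU 0
    | succ n ih => exact (hg _ _ ih (hfU (n + 1))).1
  have hσmono : ∀ n, Λ.PrefixLe (σ n) (σ (n + 1)) :=
    fun n => (hg _ _ (hσU n) (hfU (n + 1))).2.1
  have hσchain : ∀ m n, m ≤ n → Λ.PrefixLe (σ m) (σ n) := by
    intro m n hmn
    induction n, hmn using Nat.le_induction with
    | base => exact prefix_refl _
    | succ n hmn ih => exact prefix_trans ih (hσmono n)
  have hfσ : ∀ n, Λ.PrefixLe (f n) (σ n) := by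
    intro n
    cases n with
    | zero => exact prefix_refl _
    | succ n => exact (hg _ _ (hσU n) (hfU (n + 1))).2.2
  have hTne : ∀ n, (Λ.MCE lam (σ n)).Nonempty := fun n => hcompat _ (hσU n)
  -- Good x : x has extensions in MCE(lam, σ m') for arbitrarily large m'
  set Good : Λ.Mor → Prop :=
    fun x => ∀ m, ∃ m', m ≤ m' ∧ ∃ z ∈ Λ.MCE lam (σ m'), Λ.PrefixLe x z with hGood
  -- base of the König branch
  have hbase : ∃ x ∈ Λ.MCE lam (σ 0), Good x := by
    refine pigeon (hFA lam (σ 0)) (fun m' y => ∃ z ∈ Λ.MCE lam (σ m'), Λ.PrefixLe y z) ?_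
    intro m
    obtain ⟨z, hz⟩ := hTne m
    obtain ⟨y, hy, hyz⟩ := mce_restrict (hσchain 0 m (Nat.zero_le m)) hz
    exact ⟨m, le_rfl, y, hy, z, hz, hyz⟩
  -- inductive step of the König branch
  have hstep : ∀ n x, x ∈ Λ.MCE lam (σ n) → Good x →
      ∃ y ∈ Λ.MCE lam (σ (n + 1)), Λ.PrefixLe x y ∧ Good y := by
    intro n x hx hgx
    have hpig : ∃ y ∈ Λ.MCE lam (σ (n + 1)), ∀ m, ∃ m', m ≤ m' ∧
        (Λ.PrefixLe x y ∧ ∃ z ∈ Λ.MCE lam (σ m'), Λ.PrefixLe y z) := by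
      refine pigeon (hFA lam (σ (n + 1)))
        (fun m' y => Λ.PrefixLe x y ∧ ∃ z ∈ Λ.MCE lam (σ m'), Λ.PrefixLe y z) ?_
      intro m
      obtain ⟨m', hm', z, hz, hxz⟩ := hgx (max m (n + 1))
      obtain ⟨y, hy, hyz⟩ := mce_restrict (hσchain (n + 1) m' (le_trans (le_max_right _ _) hm')) hz
      refine ⟨m', le_trans (le_max_left _ _) hm', y, hy, ?_, z, hz, hyz⟩
      exact mce_prefix_mce (hσmono n) hx hy hxz hyz
    obtain ⟨y, hy, hgy⟩ := hpig
    obtain ⟨_, _, hxy, _⟩ := hgy 0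
    exact ⟨y, hy, hxy, fun m => by
      obtain ⟨m', hm', _, hz⟩ := hgy m
      exact ⟨m', hm', hz⟩⟩
  -- make the step a total function and build the branch
  have hstep' : ∀ n x, ∃ y, x ∈ Λ.MCE lam (σ n) → Good x →
      y ∈ Λ.MCE lam (σ (n + 1)) ∧ Λ.PrefixLe x y ∧ Good y := by
    intro n x
    by_cases hx : x ∈ Λ.MCE lam (σ n)
    · by_cases hgx : Good x
      · obtain ⟨y, hy, h1, h2⟩ := hstep n x hx hgx
        exact ⟨y, fun _ _ => ⟨hy, h1, h2⟩⟩
      · exact ⟨x, fun _ h => absurd h hgx⟩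
    · exact ⟨x, fun h => absurd h hx⟩
  choose F hF using hstep'
  set c : ℕ → Λ.Mor := fun n => Nat.rec hbase.choose (fun n xn => F n xn) n with hc
  have hcinv : ∀ n, c n ∈ Λ.MCE lam (σ n) ∧ Good (c n) := by
    intro n; induction n with
    | zero => exact ⟨hbase.choose_spec.1, hbase.choose_spec.2⟩
    | succ n ih =>
      have := hF n (c n) ih.1 ih.2
      exact ⟨this.1, this.2.2⟩
  have hcmono : ∀ n, Λ.PrefixLe (c n) (c (n + 1)) :=
    fun n => (hF n (c n) (hcinv n).1 (hcinv n).2).2.1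
  have hcchain : ∀ m n, m ≤ n → Λ.PrefixLe (c m) (c n) := by
    intro m n hmn
    induction n, hmn using Nat.le_induction with
    | base => exact prefix_refl _
    | succ n hmn ih => exact prefix_trans ih (hcmono n)
  -- the filter generated by the branch
  set V : Set Λ.Mor := {β | ∃ n, Λ.PrefixLe β (c n)} with hV
  have hVfil : Λ.IsGraphFilter V := by
    refine ⟨⟨c 0, 0, prefix_refl _⟩, ?_, ?_⟩
    · rintro mu ⟨n, hn⟩ lm hlm
      exact ⟨n, prefix_trans hlm hn⟩
    · rintro mu ⟨n, hn⟩ nu ⟨m, hm⟩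
      refine ⟨c (max n m), ⟨max n m, prefix_refl _⟩, ?_, ?_⟩
      · exact prefix_trans hn (hcchain n _ (le_max_left _ _))
      · exact prefix_trans hm (hcchain m _ (le_max_right _ _))
  have hUV : U ⊆ V := by
    intro ν hν
    have : ν ∈ Set.range f := hf ▸ hν
    obtain ⟨k, rfl⟩ := this
    exact ⟨k, prefix_trans (hfσ k) (prefix_trans (hcinv k).1.2.1 (prefix_refl _))⟩
  have : U = V := hU.2 V hVfil hUV
  rw [this]
  exact ⟨0, (hcinv 0).1.1⟩

end PGraph

end Aux


/-- If `μ ∈ Λ`, `E` is a finite exhaustive subset of `s(μ)Λ`, and `U` is an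
ultrafilter of `Λ` containing `μ`, then `μα ∈ U` for some `α ∈ E`. -/
theorem stmt5 {G : Type u} [Group G] {Q : QLOGroup G} (Λ : PGraph Q)
    (hFA : Λ.FinitelyAligned) (mu : Λ.Mor) (E : Set Λ.Mor) (hEfin : E.Finite)
    (hEsub : ∀ lam ∈ E, Λ.tgt lam = Λ.src mu)
    (hEexh : ∀ x : Λ.Mor, Λ.tgt x = Λ.src mu → ∃ lam ∈ E, (Λ.MCE x lam).Nonempty)
    (U : Set Λ.Mor) (hU : Λ.IsGraphUltrafilter U) (hmu : mu ∈ U) :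
    ∃ a ∈ E, Λ.comp mu a ∈ U := by
  classical
  by_contra hcon
  push_neg at hcon
  have key : ∀ a : Λ.Mor, ∃ ν, a ∈ E →
      ν ∈ U ∧ ¬(Λ.MCE (Λ.comp mu a) ν).Nonempty := by
    intro a
    by_cases ha : a ∈ E
    · have hnot : ¬∀ ν ∈ U, (Λ.MCE (Λ.comp mu a) ν).Nonempty := by
        intro hall
        exact hcon a ha (PGraph.mem_of_compat hFA hU hall)
      push_neg at hnot
      obtain ⟨ν, hν, hne⟩ := hnot
      exact ⟨ν, fun _ => ⟨hν, by rw [hne]; exact Set.not_nonempty_empty⟩⟩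
    · exact ⟨mu, fun h => absurd h ha⟩
  choose g hg using key
  have hSsub : insert mu (g '' E) ⊆ U := by
    rintro b (rfl | ⟨a, ha, rfl⟩)
    · exact hmu
    · exact (hg a ha).1
  obtain ⟨ν, hνU, hbound⟩ :=
    PGraph.filter_bound hU.1 ((hEfin.image g).insert mu) hSsub
  obtain ⟨x, hx, hνeq⟩ := hbound mu (Set.mem_insert _ _)
  obtain ⟨a, haE, τ, hτ⟩ := hEexh x hx.symm
  have hmua : Λ.src mu = Λ.tgt a := (hEsub a haE).symm
  have h1 : Λ.PrefixLe ν (Λ.comp mu τ) := by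
    rw [hνeq]; exact PGraph.comp_mono mu hx hτ.1
  have h2 : Λ.PrefixLe (Λ.comp mu a) (Λ.comp mu τ) :=
    PGraph.comp_mono mu hmua hτ.2.1
  have h3 : Λ.PrefixLe (g a) (Λ.comp mu τ) :=
    PGraph.prefix_trans
      (hbound (g a) (Set.mem_insert_of_mem _ ⟨a, haE, rfl⟩)) h1
  obtain ⟨w, hw, _⟩ := PGraph.mce_of_common_ext h2 h3
  exact (hg a haE).2 ⟨w, hw⟩
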